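/- Let ⟨X_n⟩ and ⟨Y_n⟩ be independent transient random walks on a network G started at ρ, and for each k let ⟨Z^k_m⟩ be a random walk started at X_k, conditionally independent of ⟨X_n⟩ and ⟨Y_n⟩ given X_k. Then P(⟨Z^k_m⟩ hits {Y_n : n ≥ 0} | ⟨X_n⟩, ⟨Y_n⟩) → 0 almost surely as k → ∞, provided ⟨X_n⟩ almost surely hits {Y_n : n ≥ 0} only finitely often. -/

import Mathlib

open MeasureTheory Filter

/-- Let `⟨X_n⟩, ⟨Y_n⟩` be independent transient random walks started at `ρ`.
By the Markov property, the probability that a fresh walk `⟨Z^k_m⟩` started at `X_k`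
(conditionally independent given `X_k`) hits the trace `{Y_n}` equals the conditional
probability `P(⟨X_m⟩_{m ≥ k} hits {Y_n} | X_0,…,X_k, ⟨Y_n⟩)`. If a.s. `⟨X_n⟩` hits
`{Y_n}` only finitely often, then this conditional probability tends to `0` a.s. -/
theorem condexp_hits_trace_tendsto_zero {Ω V : Type*} [MeasurableSpace Ω]
    [MeasurableSpace V] [MeasurableSingletonClass V] [Countable V]
    (μ : Measure Ω) [IsProbabilityMeasure μ]
    (X : ℕ → Ω → V) (Y : ℕ → Ω → V)
    (hX : ∀ n, Measurable (X n)) (hY : ∀ n, Measurable (Y n))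
    (hfin : ∀ᵐ ω ∂μ, {n : ℕ | ∃ m, X n ω = Y m ω}.Finite) :
    ∀ᵐ ω ∂μ, Tendsto
      (fun k =>
        (μ[Set.indicator {ω' | ∃ n, k ≤ n ∧ ∃ m, X n ω' = Y m ω'} (fun _ => (1 : ℝ)) |
          (⨆ i ∈ Finset.range (k + 1), MeasurableSpace.comap (X i) inferInstance) ⊔
            MeasurableSpace.comap (fun ω' => (fun m => Y m ω')) inferInstance]) ω)
      atTop (nhds 0) := by
  have hYm : Measurable (fun ω => (fun m => Y m ω)) := measurable_pi_lambda _ hY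
  set ℱ : Filtration ℕ ‹MeasurableSpace Ω› :=
    { seq := fun k => (⨆ i ∈ Finset.range (k + 1), MeasurableSpace.comap (X i) inferInstance) ⊔
        MeasurableSpace.comap (fun ω' => (fun m => Y m ω')) inferInstance
      mono' := fun k l hkl => sup_le_sup_right
        (biSup_mono fun i hi => Finset.mem_range.2 (lt_of_lt_of_le (Finset.mem_range.1 hi)
          (by omega))) _
      le' := fun k => sup_le (iSup₂_le fun i _ => (hX i).comap_le) hYm.comap_le } with hℱ
  set A : ℕ → Set Ω := fun j => {ω' | ∃ n, j ≤ n ∧ ∃ m, X n ω' = Y m ω'} with hAdef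
  have hXle : ∀ n, MeasurableSpace.comap (X n) inferInstance ≤ ⨆ k, ℱ k := by
    intro n
    have h1 : MeasurableSpace.comap (X n) inferInstance ≤ ℱ n :=
      le_trans (le_biSup (fun i => MeasurableSpace.comap (X i) inferInstance)
        (Finset.self_mem_range_succ n)) le_sup_left
    exact le_trans h1 (le_iSup (fun k => (ℱ k : MeasurableSpace Ω)) n)
  have hYle : MeasurableSpace.comap (fun ω' => (fun m => Y m ω')) inferInstance ≤ ⨆ k, ℱ k :=
    le_trans (le_sup_right : _ ≤ (ℱ 0 : MeasurableSpace Ω)) (le_iSup (fun k => (ℱ k : MeasurableSpace Ω)) 0)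
  have hA : ∀ j, MeasurableSet[⨆ k, ℱ k] (A j) := by
    intro j
    have : A j = ⋃ n, ⋃ (_ : j ≤ n), ⋃ m, ⋃ v : V,
        (X n ⁻¹' {v} ∩ (fun ω' => (fun m => Y m ω')) ⁻¹' {f | f m = v}) := by
      ext ω
      simp only [hAdef, Set.mem_setOf_eq, Set.mem_iUnion, Set.mem_inter_iff, Set.mem_preimage,
        Set.mem_singleton_iff, Set.mem_setOf_eq]
      constructor
      · rintro ⟨n, hn, m, h⟩; exact ⟨n, hn, m, Y m ω, h, rfl⟩
      · rintro ⟨n, hn, m, v, h1, h2⟩; exact ⟨n, hn, m, h1.trans h2.symm⟩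
    rw [this]
    refine MeasurableSet.iUnion fun n => MeasurableSet.iUnion fun _ =>
      MeasurableSet.iUnion fun m => MeasurableSet.iUnion fun v =>
      MeasurableSet.inter ?_ ?_
    · exact hXle n _ (MeasurableSpace.measurableSet_comap.2 ⟨{v}, measurableSet_singleton v, rfl⟩)
    · refine hYle _ (MeasurableSpace.measurableSet_comap.2
        ⟨(fun f : ℕ → V => f m) ⁻¹' {v}, measurable_pi_apply m (measurableSet_singleton v), rfl⟩)
  have hsuple : (⨆ k, ℱ k) ≤ ‹MeasurableSpace Ω› := iSup_le ℱ.le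
  set g : ℕ → Ω → ℝ := fun j => Set.indicator (A j) (fun _ => 1) with hgdef
  have hgsm : ∀ j, StronglyMeasurable[⨆ k, ℱ k] (g j) := fun j =>
    stronglyMeasurable_const.indicator (hA j)
  have hgint : ∀ j, Integrable (g j) μ := fun j =>
    (integrable_const (1 : ℝ)).indicator (hsuple _ (hA j))
  -- Lévy upward
  have hlevy : ∀ᵐ ω ∂μ, ∀ j, Tendsto (fun k => (μ[g j|ℱ k]) ω) atTop (nhds (g j ω)) :=
    ae_all_iff.2 fun j => (hgint j).tendsto_ae_condExp (hgsm j)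
  have hnn : ∀ᵐ ω ∂μ, ∀ k, 0 ≤ (μ[g k|ℱ k]) ω :=
    ae_all_iff.2 fun k => condExp_nonneg (Eventually.of_forall fun ω =>
      Set.indicator_nonneg (fun _ _ => zero_le_one) ω)
  have hmono : ∀ᵐ ω ∂μ, ∀ j k, j ≤ k → (μ[g k|ℱ k]) ω ≤ (μ[g j|ℱ k]) ω := by
    rw [ae_all_iff]
    intro j
    rw [ae_all_iff]
    intro k
    by_cases h : j ≤ k
    · refine (condExp_mono (hgint k) (hgint j) (Eventually.of_forall fun ω => ?_)).mono
        fun ω hω _ => hω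
      refine Set.indicator_le_indicator_of_subset ?_ (fun _ => zero_le_one) ω
      rintro ω' ⟨n, hn, hm⟩
      exact ⟨n, le_trans h hn, hm⟩
    · exact Eventually.of_forall fun ω h' => absurd h' h
  filter_upwards [hlevy, hnn, hmono, hfin] with ω hlevyω hnnω hmonoω hfinω
  -- choose k0 beyond all hits
  obtain ⟨N, hN⟩ := hfinω.bddAbove
  have hg0 : g (N + 1) ω = 0 := by
    apply Set.indicator_of_notMem
    rintro ⟨n, hn, m, h⟩
    exact absurd (hN ⟨m, h⟩) (by omega)
  have hlim : Tendsto (fun k => (μ[g (N + 1)|ℱ k]) ω) atTop (nhds 0) := by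
    have := hlevyω (N + 1); rwa [hg0] at this
  have : Tendsto (fun k => (μ[g k|ℱ k]) ω) atTop (nhds 0) :=
    squeeze_zero' (Eventually.of_forall hnnω)
      (eventually_atTop.2 ⟨N + 1, fun k hk => hmonoω (N + 1) k hk⟩) hlim
  exact this
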